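/- Let (X,‖·‖) be a real Banach space with topological dual X*, 𝓘 ⊂ (0,∞) a nonempty compact interval, and A, B : X → ℝ functionals of class C¹ with A(0) = B(0) = 0, B(u) ≥ 0 for all u ∈ X, and such that either A(u) → +∞ or B(u) → +∞ as ‖u‖ → ∞; for λ ∈ 𝓘 set I_λ := A − λB, and assume {I_λ}_{λ∈𝓘} has a uniform mountain pass geometry. Fix λ ∈ 𝓘 that is not the left endpoint of 𝓘. If the (nonincreasing) mapping μ ↦ c_{mp,μ} is differentiable at λ, then I_λ admits a bounded Palais–Smale sequence at the mountain pass level c_{mp,λ}: there exists {u_n} ⊂ X with sup_n ‖u_n‖ < ∞, I_λ(u_n) → c_{mp,λ}, and I_λ'(u_n) → 0 in X*. -/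

import Mathlib

open Filter Topology Set

section helpers

set_option linter.unusedSectionVars false

lemma my_ekeland {M : Type*} [MetricSpace M] [CompleteSpace M] (F : M → ℝ) (m₀ : ℝ)
    (hbdd : ∀ x, m₀ ≤ F x)
    (hlsc : ∀ (u : ℕ → M) (x : M) (r : ℝ), Tendsto u atTop (𝓝 x) →
      (∀ n, F (u n) ≤ r) → F x ≤ r)
    (x₀ : M) (κ : ℝ) (hκ : 0 < κ) :
    ∃ x : M, F x ≤ F x₀ ∧ κ * dist x x₀ ≤ F x₀ - F x ∧
      ∀ y, F x - κ * dist y x ≤ F y := by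
  classical
  have key : ∀ (x : M) (ε : ℝ), 0 < ε → ∃ y, (F y + κ * dist y x ≤ F x) ∧
      ∀ z, F z + κ * dist z x ≤ F x → F y ≤ F z + ε := by
    intro x ε hε
    set S := {z | F z + κ * dist z x ≤ F x} with hS
    have hxS : x ∈ S := by simp [hS]
    have hbb : BddBelow (F '' S) := ⟨m₀, by rintro r ⟨z, _, rfl⟩; exact hbdd z⟩
    have hlt : sInf (F '' S) < sInf (F '' S) + ε := by linarith
    obtain ⟨r, ⟨y, hyS, rfl⟩, hr⟩ := exists_lt_of_csInf_lt (Set.Nonempty.image F ⟨x, hxS⟩) hlt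
    exact ⟨y, hyS, fun z hz => le_trans hr.le (by
      have := csInf_le hbb ⟨z, hz, rfl⟩; linarith)⟩
  set seq : ℕ → M := fun n => Nat.recAux x₀
    (fun n x => Classical.choose (key x ((1:ℝ)/2^n) (by positivity))) n with hseq
  have hseq0 : seq 0 = x₀ := rfl
  have hstep : ∀ n, (F (seq (n+1)) + κ * dist (seq (n+1)) (seq n) ≤ F (seq n)) ∧
      ∀ z, F z + κ * dist z (seq n) ≤ F (seq n) → F (seq (n+1)) ≤ F z + (1:ℝ)/2^n := by
    intro n
    exact Classical.choose_spec (key (seq n) ((1:ℝ)/2^n) (by positivity))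
  have hanti1 : ∀ n, F (seq (n+1)) ≤ F (seq n) := by
    intro n
    have := (hstep n).1
    have := dist_nonneg (x := seq (n+1)) (y := seq n)
    nlinarith
  have hanti : ∀ m n, m ≤ n → F (seq n) ≤ F (seq m) := by
    intro m n h
    induction n with
    | zero => simp_all
    | succ k ih =>
      rcases Nat.lt_or_ge m (k+1) with h'|h'
      · exact le_trans (hanti1 k) (ih (Nat.lt_succ_iff.mp h'))
      · have : m = k + 1 := le_antisymm h h'
        simp [this]
  have hchain : ∀ m n, m ≤ n → F (seq n) + κ * dist (seq n) (seq m) ≤ F (seq m) := by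
    intro m n h
    induction n with
    | zero => interval_cases m; simp
    | succ k ih =>
      rcases Nat.lt_or_ge m (k+1) with h'|h'
      · have h1 := ih (Nat.lt_succ_iff.mp h')
        have h2 := (hstep k).1
        have h3 := dist_triangle (seq (k+1)) (seq k) (seq m)
        nlinarith [hκ.le]
      · have : m = k + 1 := le_antisymm h h'
        simp [this]
  -- F ∘ seq converges
  have hbddb : BddBelow (Set.range fun n => F (seq n)) := ⟨m₀, by rintro r ⟨n, rfl⟩; exact hbdd _⟩
  set L := ⨅ n, F (seq n) with hL
  have hFlim : Tendsto (fun n => F (seq n)) atTop (𝓝 L) :=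
    tendsto_atTop_ciInf (fun i j h => hanti i j h) hbddb
  have hLle : ∀ n, L ≤ F (seq n) := fun n => ciInf_le hbddb n
  -- seq is Cauchy
  have hcauchy : CauchySeq seq := by
    apply cauchySeq_of_le_tendsto_0 (fun N => (F (seq N) - L)/κ)
    · intro n m N hn hm
      rcases le_total n m with h|h
      · have h1 := hchain n m h
        have h2 := hanti N n hn
        have h3 := hLle m
        rw [dist_comm, le_div_iff₀ hκ]
        nlinarith
      · have h1 := hchain m n h
        have h2 := hanti N m hm
        have h3 := hLle n
        rw [le_div_iff₀ hκ]
        nlinarith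
    · have : Tendsto (fun N => (F (seq N) - L)/κ) atTop (𝓝 ((L - L)/κ)) :=
        ((hFlim.sub tendsto_const_nhds).div_const κ)
      simpa using this
  obtain ⟨x, hx⟩ := cauchySeq_tendsto_of_complete hcauchy
  have hFx : ∀ m, F x ≤ F (seq m) := by
    intro m
    apply hlsc (fun k => seq (m + k)) x (F (seq m))
    · exact hx.comp (tendsto_add_atTop_nat m |>.comp tendsto_id) |>.congr (by simp [Nat.add_comm])
    · intro k; exact hanti m (m + k) (Nat.le_add_right _ _)
  have hdistx : ∀ m, κ * dist x (seq m) ≤ F (seq m) - F x := by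
    intro m
    have h1 : Tendsto (fun n => κ * dist (seq n) (seq m)) atTop (𝓝 (κ * dist x (seq m))) :=
      (((continuous_id.dist continuous_const).tendsto x).comp hx).const_mul κ
    have h2 : ∀ᶠ n in atTop, κ * dist (seq n) (seq m) ≤ F (seq m) - F x := by
      filter_upwards [eventually_ge_atTop m] with n hn
      have := hchain m n hn
      have := hFx n
      linarith
    exact le_of_tendsto h1 h2
  refine ⟨x, by simpa [hseq0] using hFx 0, by simpa [hseq0] using hdistx 0, ?_⟩
  intro y
  by_contra hy
  push_neg at hy
  have hyS : ∀ m, F y + κ * dist y (seq m) ≤ F (seq m) := by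
    intro m
    have h1 := dist_triangle y x (seq m)
    have h2 := hdistx m
    have h3 : κ * dist y (seq m) ≤ κ * (dist y x + dist x (seq m)) :=
      mul_le_mul_of_nonneg_left h1 hκ.le
    nlinarith [dist_nonneg (x := y) (y := x)]
  have hFxy : F x ≤ F y := by
    apply le_of_forall_pos_le_add
    intro ε hε
    obtain ⟨m, hm⟩ := exists_pow_lt_of_lt_one hε (by norm_num : (1:ℝ)/2 < 1)
    have := (hstep m).2 y (hyS m)
    have h4 := hFx (m+1)
    have h5 : (1:ℝ)/2^m ≤ ε := by
      rw [one_div, ← inv_pow]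
      calc ((2:ℝ)⁻¹)^m = ((1:ℝ)/2)^m := by norm_num
      _ ≤ ε := hm.le
    linarith
  nlinarith [dist_nonneg (x := y) (y := x), hκ.le]

variable {X : Type*} [NormedAddCommGroup X] [NormedSpace ℝ X]

lemma exists_unit_lt (f : X →L[ℝ] ℝ) (α : ℝ) (hα : 0 ≤ α) (h : α < ‖f‖) :
    ∃ w : X, ‖w‖ ≤ 1 ∧ α < f w := by
  by_contra hc
  push_neg at hc
  have : ‖f‖ ≤ α := by
    apply ContinuousLinearMap.opNorm_le_bound f hα
    intro x
    rcases eq_or_ne x 0 with rfl|hx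
    · simp
    · have hxn : 0 < ‖x‖ := norm_pos_iff.mpr hx
      have h1 : f (‖x‖⁻¹ • x) ≤ α := hc _ (by
        rw [norm_smul, norm_inv, norm_norm]
        exact le_of_eq (inv_mul_cancel₀ hxn.ne'))
      have h2 : f (-(‖x‖⁻¹ • x)) ≤ α := hc _ (by
        rw [norm_neg, norm_smul, norm_inv, norm_norm]
        exact le_of_eq (inv_mul_cancel₀ hxn.ne'))
      rw [map_neg] at h2
      rw [map_smul] at h1 h2
      rw [smul_eq_mul] at h1 h2
      have e1 : ‖x‖ * (‖x‖⁻¹ * f x) = f x := by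
        field_simp
      have : |f x| ≤ α * ‖x‖ := by
        rw [abs_le]
        constructor
        · have := mul_le_mul_of_nonneg_left h2 hxn.le
          rw [mul_neg, e1] at this
          linarith [this]
        · have := mul_le_mul_of_nonneg_left h1 hxn.le
          rw [e1] at this
          linarith [this]
      calc ‖f x‖ = |f x| := rfl
      _ ≤ α * ‖x‖ := this
  linarith

lemma segment_decrease {I : X → ℝ} (hI : ContDiff ℝ 1 I) (x v : X) (s ρ : ℝ)
    (hs : 0 ≤ s) (hρ : 0 ≤ ρ)
    (hder : ∀ τ ∈ Set.Icc (0:ℝ) s, ρ ≤ fderiv ℝ I (x - τ • v) v) :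
    I (x - s • v) ≤ I x - s * ρ := by
  have hdiff : ∀ τ : ℝ, HasDerivAt (fun τ : ℝ => I (x - τ • v) + τ * ρ)
      (-(fderiv ℝ I (x - τ • v) v) + ρ) τ := by
    intro τ
    have h1 : HasDerivAt (fun τ : ℝ => x - τ • v) (-v) τ := by
      simpa using ((hasDerivAt_id τ).smul_const v).const_sub x
    have h2 := (hI.differentiable one_ne_zero (x - τ • v)).hasFDerivAt
    have h3 := h2.comp_hasDerivAt τ h1
    exact (h3.add ((hasDerivAt_id τ).mul_const ρ)).congr_deriv (by simp [map_neg])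
  have hmono : AntitoneOn (fun τ : ℝ => I (x - τ • v) + τ * ρ) (Set.Icc 0 s) := by
    apply antitoneOn_of_deriv_nonpos (convex_Icc 0 s)
    · exact Continuous.continuousOn (by
        have : Continuous fun τ : ℝ => I (x - τ • v) + τ * ρ :=
          (hI.continuous.comp (by continuity)).add (by continuity)
        exact this)
    · intro τ _
      exact (hdiff τ).differentiableAt.differentiableWithinAt
    · intro τ hτ
      rw [interior_Icc] at hτ
      rw [(hdiff τ).deriv]
      have := hder τ ⟨hτ.1.le, hτ.2.le⟩
      linarith
  have := hmono (Set.left_mem_Icc.mpr hs) (Set.right_mem_Icc.mpr hs) hs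
  simp only [zero_smul, sub_zero, zero_mul, add_zero] at this
  linarith

end helpers

/-- The mountain pass level of a functional `I` on `X`:
`c_mp = inf over paths γ ∈ C([0,1],X) with γ 0 = 0, I (γ 1) < 0 of max_{t} I (γ t)`. -/
noncomputable def mpLevel {X : Type*} [NormedAddCommGroup X] [NormedSpace ℝ X]
    (I : X → ℝ) : ℝ :=
  sInf ((fun γ : C(unitInterval, X) => ⨆ t : unitInterval, I (γ t)) ''
    {γ : C(unitInterval, X) | γ (0 : unitInterval) = 0 ∧ I (γ (1 : unitInterval)) < 0})

set_option maxHeartbeats 2000000 in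
theorem statement7 {X : Type*} [NormedAddCommGroup X] [NormedSpace ℝ X] [CompleteSpace X]
    (a b : ℝ) (ha : 0 < a) (hab : a ≤ b)
    (A B : X → ℝ) (hA : ContDiff ℝ 1 A) (hB : ContDiff ℝ 1 B)
    (hA0 : A 0 = 0) (hB0 : B 0 = 0) (hBnonneg : ∀ u, 0 ≤ B u)
    (hcoercive :
      Tendsto A (comap (fun u : X => ‖u‖) atTop) atTop ∨
      Tendsto B (comap (fun u : X => ‖u‖) atTop) atTop)
    (hMPgeom : ∀ lam ∈ Set.Icc a b,
      ({γ : C(unitInterval, X) | γ (0 : unitInterval) = 0 ∧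
          A (γ (1 : unitInterval)) - lam * B (γ (1 : unitInterval)) < 0}).Nonempty ∧
      0 < mpLevel (fun u => A u - lam * B u))
    -- a fixed λ ∈ 𝓘 which is not the left endpoint of 𝓘
    (lam : ℝ) (hlam : lam ∈ Set.Icc a b) (hlam' : a < lam)
    -- μ ↦ c_{mp,μ} is differentiable at λ
    (hdiff : DifferentiableWithinAt ℝ
      (fun mu => mpLevel (fun u => A u - mu * B u)) (Set.Icc a b) lam) :
    ∃ u : ℕ → X,
      (∃ C : ℝ, ∀ n, ‖u n‖ ≤ C) ∧
      Tendsto (fun n => A (u n) - lam * B (u n)) atTop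
        (𝓝 (mpLevel (fun v => A v - lam * B v))) ∧
      Tendsto (fun n => ‖fderiv ℝ (fun v => A v - lam * B v) (u n)‖) atTop (𝓝 0) := by
  classical
  -- notation
  set I : X → ℝ := fun u => A u - lam * B u with hIdef
  have hIc : ContDiff ℝ 1 I := hA.sub (contDiff_const.mul hB)
  have hIcont : Continuous I := hIc.continuous
  have hI0 : I 0 = 0 := by simp [hIdef, hA0, hB0]
  have hI'cont : Continuous (fun u => fderiv ℝ I u) := hIc.continuous_fderiv one_ne_zero
  -- the sup functional and basic facts
  set Emax : ℝ → C(unitInterval, X) → ℝ :=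
    fun μ γ => ⨆ t : unitInterval, (A (γ t) - μ * B (γ t)) with hEmaxdef
  have hbddAbove : ∀ (μ : ℝ) (γ : C(unitInterval, X)),
      BddAbove (Set.range fun t : unitInterval => A (γ t) - μ * B (γ t)) := by
    intro μ γ
    exact (isCompact_range ((hA.continuous.sub
      (continuous_const.mul hB.continuous)).comp γ.continuous)).bddAbove
  have hle_Emax : ∀ (μ : ℝ) (γ : C(unitInterval, X)) (t : unitInterval),
      A (γ t) - μ * B (γ t) ≤ Emax μ γ := fun μ γ t => le_ciSup (hbddAbove μ γ) t
  have hEmax_le : ∀ (μ : ℝ) (γ : C(unitInterval, X)) (x : ℝ),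
      (∀ t : unitInterval, A (γ t) - μ * B (γ t) ≤ x) → Emax μ γ ≤ x :=
    fun μ γ x h => ciSup_le h
  set cmu : ℝ → ℝ := fun μ => mpLevel (fun u => A u - μ * B u) with hcmudef
  set c : ℝ := cmu lam with hcdef
  have hc_pos : 0 < c := (hMPgeom lam hlam).2
  have hbddBelow : ∀ μ : ℝ, BddBelow ((fun γ : C(unitInterval, X) => Emax μ γ) ''
      {γ : C(unitInterval, X) | γ (0 : unitInterval) = 0 ∧
        A (γ (1 : unitInterval)) - μ * B (γ (1 : unitInterval)) < 0}) := by
    intro μ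
    refine ⟨0, ?_⟩
    rintro r ⟨γ, ⟨hγ0, _⟩, rfl⟩
    have := hle_Emax μ γ 0
    rw [hγ0] at this
    simp only [hA0, hB0, mul_zero, sub_zero] at this
    exact this
  have hmpLevel_eq : ∀ μ : ℝ, cmu μ = sInf ((fun γ : C(unitInterval, X) => Emax μ γ) ''
      {γ : C(unitInterval, X) | γ (0 : unitInterval) = 0 ∧
        A (γ (1 : unitInterval)) - μ * B (γ (1 : unitInterval)) < 0}) := fun μ => rfl
  have hc_le : ∀ (γ : C(unitInterval, X)), γ (0 : unitInterval) = 0 →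
      I (γ (1 : unitInterval)) < 0 → c ≤ Emax lam γ := by
    intro γ h0 h1
    rw [hcdef, hmpLevel_eq]
    exact csInf_le (hbddBelow lam) ⟨γ, ⟨h0, h1⟩, rfl⟩
  -- the derivative constant
  set D : ℝ := derivWithin cmu (Set.Icc a b) lam with hDdef
  set M : ℝ := |D| + 3 with hMdef
  have hM3 : 3 ≤ M := by have := abs_nonneg D; linarith
  have hMpos : 0 < M := by linarith
  have hIapp : ∀ u : X, I u = A u - lam * B u := fun _ => rfl
  have hEmaxI : ∀ (γ : C(unitInterval, X)), Emax lam γ = ⨆ t : unitInterval, I (γ t) :=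
    fun _ => rfl
  have hgoalc : mpLevel I = c := by rw [hcdef, hcmudef]
  clear_value I Emax cmu c D M
  -- the a priori bound K from coercivity
  obtain ⟨K, hK⟩ : ∃ K : ℝ, ∀ u : X, A u ≤ c + M + b * M → B u ≤ M → ‖u‖ ≤ K := by
    rcases hcoercive with hco | hco
    · have hev : ∀ᶠ u in comap (fun u : X => ‖u‖) atTop, c + M + b * M + 1 ≤ A u :=
        hco.eventually (eventually_ge_atTop _)
      rw [eventually_comap] at hev
      obtain ⟨R, hR⟩ := eventually_atTop.mp hev
      refine ⟨R, fun u hu _ => ?_⟩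
      by_contra hcon
      push_neg at hcon
      have := hR ‖u‖ hcon.le u rfl
      linarith
    · have hev : ∀ᶠ u in comap (fun u : X => ‖u‖) atTop, M + 1 ≤ B u :=
        hco.eventually (eventually_ge_atTop _)
      rw [eventually_comap] at hev
      obtain ⟨R, hR⟩ := eventually_atTop.mp hev
      refine ⟨R, fun u _ hu => ?_⟩
      by_contra hcon
      push_neg at hcon
      have := hR ‖u‖ hcon.le u rfl
      linarith
  -- the key claim
  have key : ∀ α : ℝ, 0 < α → ∃ u : X, ‖u‖ ≤ K + 1 ∧ |I u - c| ≤ α ∧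
      ‖fderiv ℝ I u‖ ≤ α := by
    intro α hα
    by_contra hcon
    push_neg at hcon
    -- hcon : ∀ u, ‖u‖ ≤ K + 1 → |I u - c| ≤ α → α < ‖fderiv ℝ I u‖
    -- Step 1: choose μ < lam close, with control on c(μ), via differentiability
    set δ₀ : ℝ := min 1 (min (lam - a) (α / (2 * M))) with hδ₀def
    have hδ₀pos : 0 < δ₀ := by
      refine lt_min one_pos (lt_min (by linarith) (by positivity))
    have hslope : Tendsto (slope cmu lam) (𝓝[Set.Icc a b \ {lam}] lam) (𝓝 D) := by
      rw [← hasDerivWithinAt_iff_tendsto_slope, hDdef]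
      exact hdiff.hasDerivWithinAt
    have hsub : Set.Ioo a lam ⊆ Set.Icc a b \ {lam} := by
      rintro μ ⟨h1, h2⟩
      exact ⟨⟨h1.le, h2.le.trans hlam.2⟩, fun h => absurd h (by simp; exact h2.ne)⟩
    have hslope' : Tendsto (slope cmu lam) (𝓝[Set.Ioo a lam] lam) (𝓝 D) :=
      hslope.mono_left (nhdsWithin_mono lam hsub)
    haveI : (𝓝[Set.Ioo a lam] lam).NeBot := right_nhdsWithin_Ioo_neBot hlam'
    have ev1 : ∀ᶠ μ in 𝓝[Set.Ioo a lam] lam, |slope cmu lam μ - D| < 1 := by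
      have := Metric.tendsto_nhds.mp hslope' 1 one_pos
      simpa [Real.dist_eq] using this
    have ev2 : ∀ᶠ μ in 𝓝[Set.Ioo a lam] lam, dist μ lam < δ₀ := by
      have hball : Metric.ball lam δ₀ ∈ 𝓝[Set.Ioo a lam] lam :=
        nhdsWithin_le_nhds (Metric.ball_mem_nhds _ hδ₀pos)
      filter_upwards [hball] with μ hμ
      exact hμ
    have ev3 : ∀ᶠ μ in 𝓝[Set.Ioo a lam] lam, μ ∈ Set.Ioo a lam :=
      eventually_mem_nhdsWithin
    obtain ⟨μ, ⟨hμ1, hμ2⟩, hμ3⟩ := ((ev1.and ev2).and ev3).exists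
    set δ : ℝ := lam - μ with hδdef
    have hδpos : 0 < δ := by simp only [hδdef]; linarith [hμ3.2]
    have hμeq : μ - lam = -δ := by rw [hδdef]; ring
    clear_value δ₀ δ
    have hdd : dist μ lam = δ := by rw [Real.dist_eq, abs_sub_comm, ← hδdef, abs_of_pos hδpos]
    rw [hdd, hδ₀def] at hμ2
    have hδ1 : δ ≤ 1 := le_trans hμ2.le (min_le_left _ _)
    have hδα : M * δ < α / 2 := by
      have h2 : δ < α / (2 * M) := lt_of_lt_of_le hμ2 ((min_le_right _ _).trans (min_le_right _ _))
      rw [lt_div_iff₀ (by positivity)] at h2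
      have h4 : M * δ = δ * (2 * M) / 2 := by ring
      rw [h4]
      linarith
    have hμIcc : μ ∈ Set.Icc a b := ⟨hμ3.1.le, hμ3.2.le.trans hlam.2⟩
    have hμlam : μ ≤ lam := hμ3.2.le
    -- c(μ) ≤ c + (M-2) δ
    have hcμ : cmu μ ≤ c + (M - 2) * δ := by
      have hslope_eq : slope cmu lam μ = (cmu μ - c) / (μ - lam) := by
        rw [slope_def_field, hcdef]
      have habs := abs_lt.mp hμ1
      have hne : μ - lam ≠ 0 := by intro h; simp only [hδdef] at hδpos; linarith [sub_eq_zero.mp h]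
      have heq : cmu μ - c = slope cmu lam μ * (μ - lam) := by
        rw [hslope_eq, div_mul_cancel₀ _ hne]
      have hD1 : D - 1 < slope cmu lam μ := by linarith [habs.1]
      rw [hμeq] at heq
      have habsD : -|D| ≤ D := neg_abs_le D
      have hs1 : -(slope cmu lam μ) ≤ |D| + 1 := by linarith
      have hs2 : (-(slope cmu lam μ)) * δ ≤ (|D| + 1) * δ :=
        mul_le_mul_of_nonneg_right hs1 hδpos.le
      have hr : (-(slope cmu lam μ)) * δ = slope cmu lam μ * -δ := by ring
      rw [hMdef]
      have hr2 : (|D| + 3 - 2) * δ = (|D| + 1) * δ := by ring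
      linarith [heq]
    -- Step 2: choose a near-optimal path γ₀ for level μ
    obtain ⟨hΓμ, _⟩ := hMPgeom μ hμIcc
    have hsInflt : cmu μ < cmu μ + δ := by linarith
    rw [hmpLevel_eq μ] at hsInflt
    obtain ⟨r, ⟨γ₀, hγ₀Γ, rfl⟩, hropt⟩ :=
      exists_lt_of_csInf_lt (hΓμ.image _) hsInflt
    rw [← hmpLevel_eq μ] at hropt
    have hEμγ₀ : Emax μ γ₀ < cmu μ + δ := hropt
    have hγ₀0 : γ₀ (0 : unitInterval) = 0 := hγ₀Γ.1
    have hγ₀1 : I (γ₀ (1 : unitInterval)) < 0 := by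
      have h1 := hγ₀Γ.2
      have h2 := hBnonneg (γ₀ (1 : unitInterval))
      simp only [hIdef]
      nlinarith
    have hIμle : ∀ (γ : C(unitInterval, X)) (t : unitInterval),
        I (γ t) ≤ A (γ t) - μ * B (γ t) := by
      intro γ t
      have := hBnonneg (γ t)
      simp only [hIdef]
      nlinarith
    have hElam0 : Emax lam γ₀ ≤ Emax μ γ₀ := by
      apply hEmax_le
      intro t
      rw [← hIapp (γ₀ t)]
      exact le_trans (hIμle γ₀ t) (hle_Emax μ γ₀ t)
    have hE0 : Emax lam γ₀ ≤ c + M * δ := by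
      calc Emax lam γ₀ ≤ Emax μ γ₀ := hElam0
      _ ≤ cmu μ + δ := hEμγ₀.le
      _ ≤ c + (M - 2) * δ + δ := by linarith
      _ ≤ c + M * δ := by
          have h2 : (M - 2) * δ + δ - M * δ = -δ := by ring
          linarith
    have hcE0 : c ≤ Emax lam γ₀ := hc_le γ₀ hγ₀0 hγ₀1
    -- Step 3: the threshold θ
    set θ : ℝ := min δ (min c α) / 2 with hθdef
    have hθpos : 0 < θ := by
      have h := lt_min hδpos (lt_min hc_pos hα)
      rw [hθdef]
      linarith
    have hθδ : θ ≤ δ / 2 := by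
      have := min_le_left δ (min c α)
      simp only [hθdef]; linarith
    have hθc : θ ≤ c / 2 := by
      have := (min_le_right δ (min c α)).trans (min_le_left c α)
      simp only [hθdef]; linarith
    have hθα : θ ≤ α := by
      have h1 := (min_le_right δ (min c α)).trans (min_le_right c α)
      simp only [hθdef]; linarith
    -- Step 4: the constrained path space and Ekeland's principle
    set P : C(unitInterval, X) → Prop := fun σ =>
      σ (0 : unitInterval) = 0 ∧ σ (1 : unitInterval) = γ₀ (1 : unitInterval) ∧
        ∀ t : unitInterval, I (σ t) ≤ I (γ₀ t) with hPdef
    have hPclosed : IsClosed {σ : C(unitInterval, X) | P σ} := by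
      have hset : {σ : C(unitInterval, X) | P σ} =
          ({σ : C(unitInterval, X) | σ (0:unitInterval) = 0} ∩
           {σ : C(unitInterval, X) | σ (1:unitInterval) = γ₀ (1:unitInterval)} ∩
           ⋂ t : unitInterval, {σ : C(unitInterval, X) | I (σ t) ≤ I (γ₀ t)}) := by
        ext σ
        simp only [hPdef, Set.mem_setOf_eq, Set.mem_inter_iff, Set.mem_iInter]
        tauto
      rw [hset]
      refine (IsClosed.inter (IsClosed.inter ?_ ?_) ?_)
      · exact isClosed_eq (continuous_eval_const _) continuous_const
      · exact isClosed_eq (continuous_eval_const _) continuous_const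
      · exact isClosed_iInter fun t => isClosed_le
          (hIcont.comp (continuous_eval_const t)) continuous_const
    haveI hMScomplete : CompleteSpace {σ : C(unitInterval, X) // P σ} :=
      hPclosed.completeSpace_coe
    set F : {σ : C(unitInterval, X) // P σ} → ℝ := fun σ => Emax lam σ.1 with hFdef
    have hFbdd : ∀ σ, (0:ℝ) ≤ F σ := by
      intro σ
      have h0 := σ.2.1
      have h1 := hle_Emax lam σ.1 0
      rw [h0] at h1
      simp only [hA0, hB0, mul_zero, sub_zero] at h1
      exact h1
    have hFlsc : ∀ (w : ℕ → {σ : C(unitInterval, X) // P σ})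
        (x : {σ : C(unitInterval, X) // P σ}) (r : ℝ),
        Tendsto w atTop (𝓝 x) → (∀ n, F (w n) ≤ r) → F x ≤ r := by
      intro w x r hconv hler
      show Emax lam x.1 ≤ r
      rw [hEmaxI]
      apply ciSup_le
      intro t
      have h1 : Tendsto (fun n => ((w n).1 : C(unitInterval, X))) atTop (𝓝 x.1) :=
        (continuous_subtype_val.tendsto x).comp hconv
      have h2 : Tendsto (fun n => (w n).1 t) atTop (𝓝 (x.1 t)) :=
        ((continuous_eval_const t).tendsto x.1).comp h1
      have h3 : Tendsto (fun n => I ((w n).1 t)) atTop (𝓝 (I (x.1 t))) :=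
        (hIcont.tendsto _).comp h2
      apply le_of_tendsto h3
      filter_upwards with n
      have h4 : I ((w n).1 t) ≤ F (w n) := by
        rw [hIapp]
        exact hle_Emax lam (w n).1 t
      exact le_trans h4 (hler n)
    have hx₀P : P γ₀ := ⟨hγ₀0, rfl, fun t => le_rfl⟩
    set κ : ℝ := M * δ with hκdef
    have hκpos : 0 < κ := mul_pos hMpos hδpos
    obtain ⟨γs, hγs1, hγs2, hγs3⟩ := my_ekeland F 0 hFbdd hFlsc ⟨γ₀, hx₀P⟩ κ hκpos
    set γ : C(unitInterval, X) := γs.1 with hγdef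
    have hγ0 : γ (0:unitInterval) = 0 := γs.2.1
    have hγ1 : γ (1:unitInterval) = γ₀ (1:unitInterval) := γs.2.2.1
    have hγle : ∀ t, I (γ t) ≤ I (γ₀ t) := γs.2.2.2
    have hFγs : F γs = Emax lam γ := rfl
    have hFx₀ : F ⟨γ₀, hx₀P⟩ = Emax lam γ₀ := rfl
    have hEγle : Emax lam γ ≤ c + M * δ := by
      have h1 := hγs1
      rw [hFγs, hFx₀] at h1
      exact le_trans h1 hE0
    have hcEγ : c ≤ Emax lam γ := hc_le γ hγ0 (by rw [hγ1]; exact hγ₀1)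
    have hdist1 : dist γ γ₀ ≤ 1 := by
      have h1 := hγs2
      rw [hFγs, hFx₀] at h1
      have h2 : dist γs (⟨γ₀, hx₀P⟩ : {σ // P σ}) = dist γ γ₀ :=
        Subtype.dist_eq γs ⟨γ₀, hx₀P⟩
      rw [h2] at h1
      have h3 : κ * dist γ γ₀ ≤ κ * 1 := by
        rw [mul_one]
        linarith
      exact le_of_mul_le_mul_left h3 hκpos
    have hdistpt : ∀ t : unitInterval, ‖γ t - γ₀ t‖ ≤ 1 := by
      intro t
      rw [← dist_eq_norm]
      exact le_trans (ContinuousMap.dist_apply_le_dist t) hdist1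
    have hlm : lam - μ = δ := by linarith [hμeq]
    -- Step 5: localization
    have hloc : ∀ t : unitInterval, c - θ ≤ I (γ t) → ‖γ t‖ ≤ K + 1 := by
      intro t ht
      have h0 : c - δ ≤ I (γ₀ t) := by
        have := hγle t
        have hθδ' : θ ≤ δ := by linarith
        linarith
      have h0' : c - δ ≤ A (γ₀ t) - lam * B (γ₀ t) := by rw [← hIapp]; exact h0
      have hBle : B (γ₀ t) ≤ M := by
        have h1 : A (γ₀ t) - μ * B (γ₀ t) ≤ cmu μ + δ := le_trans (hle_Emax μ γ₀ t) hEμγ₀.le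
        have h4 : (A (γ₀ t) - μ * B (γ₀ t)) - (A (γ₀ t) - lam * B (γ₀ t)) = δ * B (γ₀ t) := by
          rw [← hlm]; ring
        have h5 : δ * B (γ₀ t) ≤ δ * M := by
          have h6 : δ * M = M * δ := mul_comm _ _
          rw [h6]
          have h7 : (M - 2) * δ + 2 * δ = M * δ := by ring
          linarith
        exact le_of_mul_le_mul_left h5 hδpos
      have hAle : A (γ₀ t) ≤ c + M + b * M := by
        have h5 : A (γ₀ t) - lam * B (γ₀ t) ≤ c + M * δ := le_trans (hle_Emax lam γ₀ t) hE0
        have h6 : lam * B (γ₀ t) ≤ b * M := by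
          have := mul_le_mul hlam.2 hBle (hBnonneg (γ₀ t)) (by linarith : (0:ℝ) ≤ b)
          linarith
        have h7 : M * δ ≤ M := mul_le_of_le_one_right hMpos.le hδ1
        linarith
      have h8 := hK (γ₀ t) hAle hBle
      have h9 : γ t = γ₀ t + (γ t - γ₀ t) := by abel
      calc ‖γ t‖ = ‖γ₀ t + (γ t - γ₀ t)‖ := by rw [← h9]
      _ ≤ ‖γ₀ t‖ + ‖γ t - γ₀ t‖ := norm_add_le _ _
      _ ≤ K + 1 := add_le_add h8 (hdistpt t)
    -- Step 6: gradient lower bound on the near-maximum set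
    have hgrad : ∀ t : unitInterval, c - θ ≤ I (γ t) → α < ‖fderiv ℝ I (γ t)‖ := by
      intro t ht
      apply hcon (γ t) (hloc t ht)
      rw [abs_le]
      constructor
      · linarith
      · have h1 : I (γ t) ≤ Emax lam γ := by rw [hIapp]; exact hle_Emax lam γ t
        linarith
    -- Step 7: the near-maximum set, vector field data, finite cover
    set Ts : Set unitInterval := {t | c - θ ≤ I (γ t)} with hTsdef
    have hTsclosed : IsClosed Ts := isClosed_le continuous_const (hIcont.comp γ.continuous)
    have hTscomp : IsCompact Ts := hTsclosed.isCompact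
    have hTsne : Ts.Nonempty := by
      by_contra hne
      rw [Set.not_nonempty_iff_eq_empty] at hne
      have hub : Emax lam γ ≤ c - θ := by
        rw [hEmaxI]
        apply ciSup_le
        intro t
        by_contra hlt
        push_neg at hlt
        have h2 : t ∈ Ts := hlt.le
        rw [hne] at h2
        exact h2
      linarith
    have hWR : ∀ t : unitInterval, ∃ (r : ℝ) (w : X), 0 < r ∧ r ≤ 1 ∧ ‖w‖ ≤ 1 ∧
        (t ∈ Ts → ∀ z : X, ‖z - γ t‖ ≤ 2 * r → α / 2 ≤ (fderiv ℝ I z) w) := by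
      intro t
      by_cases ht : t ∈ Ts
      · obtain ⟨w, hw1, hw2⟩ := exists_unit_lt (fderiv ℝ I (γ t)) α hα.le (hgrad t ht)
        have hopen : IsOpen {z : X | α / 2 < (fderiv ℝ I z) w} :=
          isOpen_lt continuous_const ((ContinuousLinearMap.apply ℝ ℝ w).continuous.comp hI'cont)
        have hmem : γ t ∈ {z : X | α / 2 < (fderiv ℝ I z) w} := by
          simp only [Set.mem_setOf_eq]
          linarith
        obtain ⟨ρ, hρpos, hρball⟩ := Metric.isOpen_iff.mp hopen _ hmem
        refine ⟨min 1 (ρ / 3), w, lt_min one_pos (by positivity), min_le_left _ _, hw1, ?_⟩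
        intro _ z hz
        have h2 : ‖z - γ t‖ < ρ := by
          have h3 : 2 * min 1 (ρ/3) ≤ 2 * (ρ/3) := by
            have := min_le_right 1 (ρ/3)
            linarith
          linarith
        have h4 := hρball (show z ∈ Metric.ball (γ t) ρ by
          rw [Metric.mem_ball, dist_eq_norm]; exact h2)
        exact (le_of_lt h4)
      · exact ⟨1, 0, one_pos, le_rfl, by simp, fun h => absurd h ht⟩
    choose R W hR0 hR1 hW hRW using hWR
    obtain ⟨Fs, hFsTs, hFscov⟩ := hTscomp.elim_nhds_subcover
      (fun t => {s : unitInterval | ‖γ s - γ t‖ < R t})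
      (fun t _ => (isOpen_lt ((γ.continuous.sub continuous_const).norm)
        continuous_const).mem_nhds (by simp [hR0 t]))
    -- Step 8: partition of unity
    set g : unitInterval → unitInterval → ℝ := fun i s => max 0 (R i - ‖γ s - γ i‖) with hgdef
    have hgcont : ∀ i, Continuous (g i) := fun i =>
      continuous_const.max (continuous_const.sub ((γ.continuous.sub continuous_const).norm))
    have hgnn : ∀ i s, 0 ≤ g i s := fun i s => le_max_left _ _
    have hgpos : ∀ i s, ‖γ s - γ i‖ < R i → 0 < g i s := by
      intro i s h
      have h1 : 0 < R i - ‖γ s - γ i‖ := by linarith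
      exact lt_max_of_lt_right h1
    set G : unitInterval → ℝ := fun s => ∑ i ∈ Fs, g i s with hGdef
    have hGcont : Continuous G := continuous_finset_sum _ (fun i _ => hgcont i)
    have hGpos : ∀ s ∈ Ts, 0 < G s := by
      intro s hs
      obtain ⟨i, hiFs, hi⟩ := Set.mem_iUnion₂.mp (hFscov hs)
      exact Finset.sum_pos' (fun j _ => hgnn j s) ⟨i, hiFs, hgpos i s hi⟩
    obtain ⟨t₀, ht₀Ts, ht₀min⟩ := hTscomp.exists_isMinOn hTsne hGcont.continuousOn
    set ε₀ : ℝ := G t₀ with hε₀def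
    have hε₀pos : 0 < ε₀ := hGpos t₀ ht₀Ts
    have hε₀le : ∀ s ∈ Ts, ε₀ ≤ G s := fun s hs => ht₀min hs
    have hmaxpos : ∀ s, 0 < max (G s) ε₀ := fun s => lt_max_of_lt_right hε₀pos
    set φ : unitInterval → unitInterval → ℝ := fun i s => g i s / max (G s) ε₀ with hφdef
    have hφcont : ∀ i, Continuous (φ i) :=
      fun i => (hgcont i).div (hGcont.max continuous_const) (fun s => (hmaxpos s).ne')
    have hφnn : ∀ i s, 0 ≤ φ i s := fun i s => div_nonneg (hgnn i s) (hmaxpos s).le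
    have hφsum_le : ∀ s, ∑ i ∈ Fs, φ i s ≤ 1 := by
      intro s
      have h1 : ∑ i ∈ Fs, φ i s = G s / max (G s) ε₀ := by
        rw [← Finset.sum_div]
      rw [h1, div_le_one (hmaxpos s)]
      exact le_max_left _ _
    have hφsum_eq : ∀ s ∈ Ts, ∑ i ∈ Fs, φ i s = 1 := by
      intro s hs
      have h1 : ∑ i ∈ Fs, φ i s = G s / max (G s) ε₀ := by
        rw [← Finset.sum_div]
      rw [h1, max_eq_left (hε₀le s hs)]
      exact div_self (hGpos s hs).ne'
    have hφpos_imp : ∀ i s, 0 < φ i s → ‖γ s - γ i‖ < R i := by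
      intro i s h
      by_contra hc
      push_neg at hc
      have hg0 : g i s = 0 := max_eq_left (by linarith)
      have hφ0 : φ i s = 0 := by
        show g i s / max (G s) ε₀ = 0
        rw [hg0, zero_div]
      rw [hφ0] at h
      exact lt_irrefl _ h
    -- Step 9: the cutoff and deformation vector field
    set χ : unitInterval → ℝ := fun s => min 1 (max 0 ((I (γ s) - (c - θ)) * (2 / θ))) with hχdef
    have hχcont : Continuous χ :=
      continuous_const.min (continuous_const.max
        (((hIcont.comp γ.continuous).sub continuous_const).mul continuous_const))
    have hχ01 : ∀ s, 0 ≤ χ s ∧ χ s ≤ 1 := fun s =>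
      ⟨le_min zero_le_one (le_max_left _ _), min_le_left _ _⟩
    have hχ0 : ∀ s, I (γ s) ≤ c - θ → χ s = 0 := by
      intro s hs
      have h1 : (I (γ s) - (c - θ)) * (2 / θ) ≤ 0 :=
        mul_nonpos_of_nonpos_of_nonneg (by linarith) (le_of_lt (div_pos two_pos hθpos))
      show min 1 (max 0 ((I (γ s) - (c - θ)) * (2 / θ))) = 0
      rw [max_eq_left h1]
      exact min_eq_right zero_le_one
    have hχ1 : ∀ s, c - θ / 2 ≤ I (γ s) → χ s = 1 := by
      intro s hs
      have h0 : θ / 2 ≤ I (γ s) - (c - θ) := by linarith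
      have h1 : (1:ℝ) ≤ (I (γ s) - (c - θ)) * (2 / θ) := by
        calc (1:ℝ) = (θ/2) * (2/θ) := by field_simp
        _ ≤ _ := mul_le_mul_of_nonneg_right h0 (le_of_lt (div_pos two_pos hθpos))
      show min 1 (max 0 ((I (γ s) - (c - θ)) * (2 / θ))) = 1
      rw [max_eq_right (by linarith : (0:ℝ) ≤ (I (γ s) - (c - θ)) * (2 / θ))]
      exact min_eq_left h1
    have hχpos : ∀ s, 0 < χ s → c - θ < I (γ s) := by
      intro s h
      by_contra hc
      push_neg at hc
      rw [hχ0 s hc] at h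
      exact lt_irrefl _ h
    set v : unitInterval → X := fun s => χ s • ∑ i ∈ Fs, φ i s • W i with hvdef
    have hvcont : Continuous v :=
      hχcont.smul (continuous_finset_sum _ fun i _ => (hφcont i).smul continuous_const)
    have hSnorm : ∀ s, ‖∑ i ∈ Fs, φ i s • W i‖ ≤ 1 := by
      intro s
      calc ‖∑ i ∈ Fs, φ i s • W i‖ ≤ ∑ i ∈ Fs, ‖φ i s • W i‖ := norm_sum_le _ _
      _ ≤ ∑ i ∈ Fs, φ i s := Finset.sum_le_sum (fun i _ => by
          rw [norm_smul, Real.norm_eq_abs, abs_of_nonneg (hφnn i s)]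
          exact mul_le_of_le_one_right (hφnn i s) (hW i))
      _ ≤ 1 := hφsum_le s
    have hvnorm : ∀ s, ‖v s‖ ≤ 1 := by
      intro s
      show ‖χ s • ∑ i ∈ Fs, φ i s • W i‖ ≤ 1
      rw [norm_smul, Real.norm_eq_abs, abs_of_nonneg (hχ01 s).1]
      calc χ s * ‖∑ i ∈ Fs, φ i s • W i‖ ≤ 1 * 1 :=
        mul_le_mul (hχ01 s).2 (hSnorm s) (norm_nonneg _) zero_le_one
      _ = 1 := one_mul 1
    -- Step 10: the deformation step size
    have hFsne : Fs.Nonempty := by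
      obtain ⟨th, hth⟩ := hTsne
      obtain ⟨i, hiFs, _⟩ := Set.mem_iUnion₂.mp (hFscov hth)
      exact ⟨i, hiFs⟩
    set sbar : ℝ := min (Fs.inf' hFsne R) (θ / (4 * κ)) with hsbardef
    have hsbarpos : 0 < sbar := by
      apply lt_min
      · rw [Finset.lt_inf'_iff]
        exact fun i _ => hR0 i
      · apply div_pos hθpos
        linarith
    have hsbarR : ∀ i ∈ Fs, sbar ≤ R i := fun i hi =>
      le_trans (min_le_left _ _) (Finset.inf'_le R hi)
    have hsbar1 : sbar ≤ 1 := by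
      obtain ⟨i, hi⟩ := hFsne
      exact le_trans (hsbarR i hi) (hR1 i)
    have hsbarκ : κ * sbar ≤ θ / 4 := by
      have h1 : sbar ≤ θ / (4 * κ) := min_le_right _ _
      rw [le_div_iff₀ (by linarith : (0:ℝ) < 4 * κ)] at h1
      have hr : sbar * (4 * κ) = 4 * (κ * sbar) := by ring
      linarith
    -- Step 11: pointwise decrease along the deformation
    have hdec : ∀ t : unitInterval, I (γ t - sbar • v t) ≤ I (γ t) - sbar * (χ t * (α / 2)) := by
      intro t
      by_cases hχt : χ t = 0
      · have hv0' : v t = 0 := by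
          show χ t • ∑ i ∈ Fs, φ i t • W i = 0
          rw [hχt, zero_smul]
        rw [hv0', smul_zero, sub_zero, hχt, zero_mul, mul_zero, sub_zero]
      · have hχtpos : 0 < χ t := lt_of_le_of_ne (hχ01 t).1 (Ne.symm hχt)
        have htTs : t ∈ Ts := (hχpos t hχtpos).le
        apply segment_decrease hIc (γ t) (v t) sbar (χ t * (α / 2)) hsbarpos.le
          (mul_nonneg (hχ01 t).1 (by linarith))
        intro τ hτ
        have hvt : v t = χ t • ∑ i ∈ Fs, φ i t • W i := rfl
        rw [hvt, map_smul, map_sum]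
        have hterm : ∀ i ∈ Fs, φ i t * (α / 2) ≤
            (fderiv ℝ I (γ t - τ • v t)) (φ i t • W i) := by
          intro i hi
          rw [map_smul, smul_eq_mul]
          rcases eq_or_lt_of_le (hφnn i t) with h0 | hpos
          · rw [← h0, zero_mul, zero_mul]
          · have hdst : ‖γ t - γ i‖ < R i := hφpos_imp i t hpos
            have hzi : ‖(γ t - τ • v t) - γ i‖ ≤ 2 * R i := by
              have h1 : (γ t - τ • v t) - γ i = (γ t - γ i) - τ • v t := by abel
              rw [h1]
              have h2 : ‖τ • v t‖ ≤ sbar := by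
                rw [norm_smul, Real.norm_eq_abs, abs_of_nonneg hτ.1]
                calc τ * ‖v t‖ ≤ τ * 1 := mul_le_mul_of_nonneg_left (hvnorm t) hτ.1
                _ = τ := mul_one τ
                _ ≤ sbar := hτ.2
              calc ‖(γ t - γ i) - τ • v t‖ ≤ ‖γ t - γ i‖ + ‖τ • v t‖ := norm_sub_le _ _
              _ ≤ R i + sbar := add_le_add hdst.le h2
              _ ≤ 2 * R i := by
                  have := hsbarR i hi
                  linarith
            exact mul_le_mul_of_nonneg_left (hRW i (hFsTs i hi) _ hzi) (hφnn i t)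
        have hsum : (α / 2) ≤ ∑ i ∈ Fs, (fderiv ℝ I (γ t - τ • v t)) (φ i t • W i) := by
          calc (α/2) = (∑ i ∈ Fs, φ i t) * (α/2) := by rw [hφsum_eq t htTs, one_mul]
          _ = ∑ i ∈ Fs, φ i t * (α/2) := by rw [Finset.sum_mul]
          _ ≤ _ := Finset.sum_le_sum hterm
        rw [smul_eq_mul]
        exact mul_le_mul_of_nonneg_left hsum (hχ01 t).1
    -- Step 12: the deformed path and the contradiction
    have hv0 : v 0 = 0 := by
      show χ (0:unitInterval) • ∑ i ∈ Fs, φ i (0:unitInterval) • W i = 0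
      rw [hχ0 (0:unitInterval) (by rw [hγ0, hI0]; linarith), zero_smul]
    have hv1 : v 1 = 0 := by
      show χ (1:unitInterval) • ∑ i ∈ Fs, φ i (1:unitInterval) • W i = 0
      rw [hχ0 (1:unitInterval) (by rw [hγ1]; linarith), zero_smul]
    set η : C(unitInterval, X) :=
      ⟨fun t => γ t - sbar • v t, γ.continuous.sub (continuous_const.smul hvcont)⟩ with hηdef
    have hηapp : ∀ t, η t = γ t - sbar • v t := fun t => rfl
    have hηP : P η := by
      refine ⟨?_, ?_, ?_⟩
      · rw [hηapp, hγ0, hv0, smul_zero, sub_zero]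
      · rw [hηapp, hv1, smul_zero, sub_zero, hγ1]
      · intro t
        rw [hηapp]
        have h1 := hdec t
        have h2 : 0 ≤ sbar * (χ t * (α/2)) :=
          mul_nonneg hsbarpos.le (mul_nonneg (hχ01 t).1 (by linarith))
        linarith [hγle t]
    have hdistη : dist (⟨η, hηP⟩ : {σ // P σ}) γs ≤ sbar := by
      rw [Subtype.dist_eq]
      rw [ContinuousMap.dist_le hsbarpos.le]
      intro t
      rw [dist_eq_norm, hηapp]
      have h1 : γ t - sbar • v t - γ t = -(sbar • v t) := by abel
      rw [h1, norm_neg, norm_smul, Real.norm_eq_abs, abs_of_nonneg hsbarpos.le]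
      calc sbar * ‖v t‖ ≤ sbar * 1 := mul_le_mul_of_nonneg_left (hvnorm t) hsbarpos.le
      _ = sbar := mul_one sbar
    have hEη : Emax lam η ≤ max (c - θ/2) (Emax lam γ - sbar * (α/2)) := by
      rw [hEmaxI]
      apply ciSup_le
      intro t
      rcases le_or_gt (c - θ/2) (I (γ t)) with h | h
      · have hχ1t := hχ1 t h
        have h1 := hdec t
        rw [hχ1t, one_mul] at h1
        have h2 : I (γ t) ≤ Emax lam γ := by rw [hIapp]; exact hle_Emax lam γ t
        rw [hηapp]
        exact le_trans (by linarith) (le_max_right _ _)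
      · have h1 := hdec t
        have h2 : 0 ≤ sbar * (χ t * (α/2)) :=
          mul_nonneg hsbarpos.le (mul_nonneg (hχ01 t).1 (by linarith))
        rw [hηapp]
        exact le_trans (by linarith) (le_max_left _ _)
    have hek := hγs3 ⟨η, hηP⟩
    have hFη : F (⟨η, hηP⟩ : {σ // P σ}) = Emax lam η := rfl
    rw [hFη, hFγs] at hek
    have h5 : Emax lam γ - κ * sbar ≤ max (c - θ/2) (Emax lam γ - sbar * (α/2)) := by
      have h6 : κ * dist (⟨η, hηP⟩ : {σ // P σ}) γs ≤ κ * sbar :=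
        mul_le_mul_of_nonneg_left hdistη hκpos.le
      have h7 : dist (⟨η, hηP⟩ : {σ // P σ}) γs =
          dist (⟨η, hηP⟩ : {σ // P σ}) γs := rfl
      linarith [hek, hEη]
    rcases le_max_iff.mp h5 with h | h
    · linarith
    · have h7 : sbar * (α/2) ≤ κ * sbar := by linarith
      have h8 : κ < α / 2 := by
        rw [hκdef]
        exact hδα
      have h9 : κ * sbar < (α / 2) * sbar := mul_lt_mul_of_pos_right h8 hsbarpos
      have hr : (α / 2) * sbar = sbar * (α / 2) := by ring
      linarith

  -- assemble the sequence
  choose u hu1 hu2 hu3 using fun n : ℕ => key (1 / (n + 1)) (by positivity)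
  refine ⟨u, ⟨K + 1, hu1⟩, ?_, ?_⟩
  · rw [show (mpLevel I) = c from hgoalc, tendsto_iff_dist_tendsto_zero]
    apply squeeze_zero (fun n => dist_nonneg) (fun n => ?_)
      tendsto_one_div_add_atTop_nhds_zero_nat
    rw [Real.dist_eq, ← hIapp (u n)]
    exact hu2 n
  · apply squeeze_zero (fun n => norm_nonneg _) (fun n => ?_)
      tendsto_one_div_add_atTop_nhds_zero_nat
    exact hu3 n
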